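/- Let A be a real symmetric n×n matrix with trace 0 and let P be a real density matrix that is controllable, i.e. the unital complex subalgebra generated by A and P is the full algebra of n×n complex matrices. If for some time t the matrix U(t)·P·U(−t) has all entries real, then there is a complex number ζ with ζ^n = 1 such that U(2t) = ζ·I. -/

import Mathlib

open Matrix
open scoped ComplexOrder

/-- The transition matrix `U(t) = exp(itA)`. -/
noncomputable def U {n : ℕ} (A : Matrix (Fin n) (Fin n) ℂ) (t : ℝ) :
    Matrix (Fin n) (Fin n) ℂ :=
  NormedSpace.exp (((t : ℂ) * Complex.I) • A)

namespace Stmt8Aux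

variable {n : ℕ}

lemma real_of_herm {M : Matrix (Fin n) (Fin n) ℂ} (hH : Mᴴ = M)
    (hre : ∀ i j, (M i j).im = 0) : Mᵀ = M := by
  ext i j
  have h1 : (starRingEnd ℂ) (M j i) = M i j := congrFun (congrFun hH i) j
  rw [Matrix.transpose_apply, ← h1, Complex.conj_eq_iff_im.2 (hre j i)]

lemma U_add (A : Matrix (Fin n) (Fin n) ℂ) (s t : ℝ) :
    U A s * U A t = U A (s + t) := by
  rw [U, U, U, ← Matrix.exp_add_of_commute _ _ (((Commute.refl A).smul_left _).smul_right _)]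
  congr 1
  rw [← add_smul]
  congr 1
  push_cast
  ring

lemma U_zero (A : Matrix (Fin n) (Fin n) ℂ) : U A 0 = 1 := by
  rw [U]
  norm_num

lemma U_mul_neg (A : Matrix (Fin n) (Fin n) ℂ) (s : ℝ) : U A s * U A (-s) = 1 := by
  rw [U_add, add_neg_cancel, U_zero]

lemma U_neg_mul (A : Matrix (Fin n) (Fin n) ℂ) (s : ℝ) : U A (-s) * U A s = 1 := by
  rw [U_add, neg_add_cancel, U_zero]

lemma U_transpose {A : Matrix (Fin n) (Fin n) ℂ} (hAsym : Aᵀ = A) (s : ℝ) :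
    (U A s)ᵀ = U A s := by
  rw [U, ← Matrix.exp_transpose, Matrix.transpose_smul, hAsym]

lemma U_conjTranspose {A : Matrix (Fin n) (Fin n) ℂ} (hAH : A.IsHermitian) (s : ℝ) :
    (U A s)ᴴ = U A (-s) := by
  rw [U, U, ← Matrix.exp_conjTranspose, Matrix.conjTranspose_smul, hAH.eq]
  congr 2
  push_cast
  simp [Complex.conj_I]

lemma det_U {A : Matrix (Fin n) (Fin n) ℂ} (hAH : A.IsHermitian) (hAtr : A.trace = 0)
    (s : ℝ) : (U A s).det = 1 := by
  classical
  set c : ℂ := (s : ℂ) * Complex.I with hc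
  set W : Matrix (Fin n) (Fin n) ℂ := (hAH.eigenvectorUnitary : Matrix (Fin n) (Fin n) ℂ)
    with hWdef
  have hWu : IsUnit W := (Unitary.toUnits hAH.eigenvectorUnitary).isUnit
  set v : Fin n → ℂ := fun i => ((hAH.eigenvalues i : ℝ) : ℂ) with hv
  have hWstar : star W * W = 1 := Matrix.mem_unitaryGroup_iff'.mp hAH.eigenvectorUnitary.2
  have hWinv : W⁻¹ = star W := Matrix.inv_eq_left_inv hWstar
  have hspec : A = W * Matrix.diagonal v * star W := hAH.spectral_theorem
  have htr : ∑ i, v i = 0 := by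
    have h1 : A.trace = (Matrix.diagonal v).trace := by
      rw [hspec, Matrix.trace_mul_cycle, hWstar, one_mul]
    rw [h1, Matrix.trace_diagonal] at hAtr
    exact hAtr
  have hcA : c • A = W * Matrix.diagonal (fun i => c * v i) * W⁻¹ := by
    have hdiag : Matrix.diagonal (fun i => c * v i) = c • Matrix.diagonal v := by
      rw [← Matrix.diagonal_smul]
      rfl
    rw [hWinv, hspec, hdiag, Matrix.mul_smul, Matrix.smul_mul]
  have hU : U A s = W * NormedSpace.exp (Matrix.diagonal fun i => c * v i) * W⁻¹ := by
    rw [U, ← hc, hcA]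
    exact Matrix.exp_conj W _ hWu
  rw [hU, Matrix.det_conj hWu, Matrix.exp_diagonal, Matrix.det_diagonal]
  have h2 : ∀ i, NormedSpace.exp (fun j => c * v j) i = Complex.exp (c * v i) := by
    intro i
    rw [Pi.coe_exp, Complex.exp_eq_exp_ℂ]
  rw [Finset.prod_congr rfl fun i _ => h2 i, ← Complex.exp_sum, ← Finset.mul_sum, htr,
    mul_zero, Complex.exp_zero]

end Stmt8Aux

open Stmt8Aux

/-- If `A` is real symmetric with trace `0`, `P` is a real,
controllable density matrix, and `U(t)·P·U(−t)` is real for some `t`, then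
`U(2t) = ζ·I` for some `n`-th root of unity `ζ`. -/
theorem stmt_8 {n : ℕ} (hn : 1 ≤ n)
    (A : Matrix (Fin n) (Fin n) ℂ)
    (hAreal : ∀ i j, (A i j).im = 0) (hAsym : Aᵀ = A)
    (hAtr : A.trace = 0)
    (P : Matrix (Fin n) (Fin n) ℂ)
    (hP : P.PosSemidef) (hPtr : P.trace = 1)
    (hPreal : ∀ i j, (P i j).im = 0)
    (hctrl : Algebra.adjoin ℂ ({A, P} : Set (Matrix (Fin n) (Fin n) ℂ)) = ⊤)
    (t : ℝ)
    (hreal : ∀ i j, ((U A t * P * U A (-t)) i j).im = 0) :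
    ∃ ζ : ℂ, ζ ^ n = 1 ∧ U A (2 * t) = ζ • (1 : Matrix (Fin n) (Fin n) ℂ) := by
  classical
  have hAH : A.IsHermitian := by
    have h : Aᴴ = Aᵀ := by
      ext i j
      rw [Matrix.conjTranspose_apply, Matrix.transpose_apply]
      exact Complex.conj_eq_iff_im.2 (hAreal j i)
    exact h.trans hAsym
  have hPH : Pᴴ = P := hP.1
  have hPt : Pᵀ = P := real_of_herm hPH hPreal
  -- Q is Hermitian
  have hQH : (U A t * P * U A (-t))ᴴ = U A t * P * U A (-t) := by
    rw [Matrix.conjTranspose_mul, Matrix.conjTranspose_mul, U_conjTranspose hAH,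
      U_conjTranspose hAH, hPH, neg_neg, mul_assoc]
  have hQt : (U A t * P * U A (-t))ᵀ = U A t * P * U A (-t) :=
    real_of_herm hQH hreal
  have h2 : U A (-t) * P * U A t = U A t * P * U A (-t) := by
    calc U A (-t) * P * U A t
        = (U A t * P * U A (-t))ᵀ := by
          rw [Matrix.transpose_mul, Matrix.transpose_mul, U_transpose hAsym,
            U_transpose hAsym, hPt, mul_assoc]
      _ = U A t * P * U A (-t) := hQt
  have hU2 : U A t * U A t = U A (2 * t) := by
    rw [U_add]
    congr 1
    ring
  have h3 : U A (2 * t) * P = P * U A (2 * t) := by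
    calc U A (2 * t) * P
        = U A t * U A t * P * (U A (-t) * U A t) := by rw [U_neg_mul, hU2, mul_one]
      _ = U A t * (U A t * P * U A (-t)) * U A t := by simp only [mul_assoc]
      _ = U A t * (U A (-t) * P * U A t) * U A t := by rw [h2]
      _ = U A t * U A (-t) * P * (U A t * U A t) := by simp only [mul_assoc]
      _ = P * U A (2 * t) := by rw [U_mul_neg, hU2, one_mul]
  have hcommA : U A (2 * t) * A = A * U A (2 * t) :=
    (((Commute.refl A).smul_left (((2 * t : ℝ) : ℂ) * Complex.I)).exp_left).eq
  -- the centralizer of U(2t) contains A and P, hence everything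
  have hle : Algebra.adjoin ℂ ({A, P} : Set (Matrix (Fin n) (Fin n) ℂ)) ≤
      Subalgebra.centralizer ℂ ({U A (2 * t)} : Set (Matrix (Fin n) (Fin n) ℂ)) := by
    rw [Algebra.adjoin_le_iff]
    rintro X (rfl | rfl) <;>
      simp only [SetLike.mem_coe, Subalgebra.mem_centralizer_iff]
    · rintro g rfl
      exact hcommA
    · rintro g rfl
      exact h3
  have hcent : ∀ X : Matrix (Fin n) (Fin n) ℂ, X * U A (2 * t) = U A (2 * t) * X := by
    intro X
    have hX : X ∈ Subalgebra.centralizer ℂ ({U A (2 * t)} : Set (Matrix (Fin n) (Fin n) ℂ)) := by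
      apply hle
      rw [hctrl]
      trivial
    rw [Subalgebra.mem_centralizer_iff] at hX
    exact (hX _ rfl).symm
  have hmem : U A (2 * t) ∈ Set.range (Matrix.scalar (Fin n)) := by
    apply Matrix.mem_range_scalar_of_commute_single
    intro i j _
    exact hcent _
  obtain ⟨ζ, hζ⟩ := hmem
  have hform : U A (2 * t) = ζ • (1 : Matrix (Fin n) (Fin n) ℂ) := by
    rw [← hζ, Matrix.scalar_apply, Matrix.smul_one_eq_diagonal]
  refine ⟨ζ, ?_, hform⟩
  have hdet : (U A (2 * t)).det = 1 := det_U hAH hAtr _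
  rw [hform, Matrix.det_smul, Matrix.det_one, mul_one, Fintype.card_fin] at hdet
  exact hdet
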